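/- Let I : D ⥤ C be a fully faithful dense functor and let G : E ⥤ C be a fully faithful functor admitting a left adjoint F : C ⥤ E. Then the full subcategory of E whose objects are those of the form F(I d) for objects d of D (equivalently, its closure under isomorphism, the essential image of the composite I ⋙ F) is dense in E; that is, the inclusion functor of this full subcategory into E is a dense functor. -/

import Mathlib

open CategoryTheory CategoryTheory.Limits

universe v₁ u₁ v₂ u₂ v₃ u₃

/-- The nerve functor of `F : D ⥤ C`, i.e. the restriction of the Yoneda embedding of `C`
along `F`, sending `c` to `C(F -, c)`. -/
def nerveFunctor' {D : Type u₁} [Category.{v₁} D] {C : Type u₂} [Category.{v₂} C]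
    (F : D ⥤ C) : C ⥤ Dᵒᵖ ⥤ Type v₂ :=
  yoneda ⋙ (Functor.whiskeringLeft Dᵒᵖ Cᵒᵖ (Type v₂)).obj F.op

/-- A functor is *dense* if its nerve functor is fully faithful. -/
def IsDenseFunctor {D : Type u₁} [Category.{v₁} D] {C : Type u₂} [Category.{v₂} C]
    (F : D ⥤ C) : Prop :=
  (nerveFunctor' F).Full ∧ (nerveFunctor' F).Faithful

lemma nerveFunctor'_map_app {D : Type u₁} [Category.{v₁} D] {C : Type u₂} [Category.{v₂} C]
    (F : D ⥤ C) {X Y : C} (f : X ⟶ Y) (d : Dᵒᵖ) (u : F.obj d.unop ⟶ X) :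
    ((nerveFunctor' F).map f).app d u = u ≫ f := rfl

/-- Statement 18: if `I : D ⥤ C` is fully faithful and dense and `G : E ⥤ C` is fully
faithful with a left adjoint `F`, then the essential image of `I ⋙ F` (the closure under
isomorphism of the full subcategory on the objects `F (I d)`) is dense in `E`, i.e. its
inclusion functor is dense. -/
theorem dense_essImage_of_reflective
    {D : Type u₁} [Category.{v₁} D] {C : Type u₂} [Category.{v₂} C]
    {E : Type u₃} [Category.{v₃} E]
    (I : D ⥤ C) [I.Full] [I.Faithful] (hI : IsDenseFunctor I)
    (G : E ⥤ C) [G.Full] [G.Faithful] (F : C ⥤ E) (adj : F ⊣ G) :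
    IsDenseFunctor (I ⋙ F).essImage.ι := by
  set J := (I ⋙ F).essImage.ι with hJ
  -- the object `F (I d)` as an object of the essential image subcategory
  let objOf : D → (I ⋙ F).EssImageSubcategory := fun d =>
    ⟨F.obj (I.obj d), (I ⋙ F).obj_mem_essImage d⟩
  constructor
  · -- Fullness
    constructor
    intro X Y α
    -- transport α along the adjunction to a nat trans on the nerve of I
    let β : (nerveFunctor' I).obj (G.obj X) ⟶ (nerveFunctor' I).obj (G.obj Y) :=
      { app := fun d => TypeCat.ofHom fun v =>
          adj.homEquiv _ _ (α.app (Opposite.op (objOf d.unop))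
            ((adj.homEquiv _ _).symm v))
        naturality := by
          intro d d' h
          ext v
          change I.obj d.unop ⟶ G.obj X at v
          have hn := ConcreteCategory.congr_hom (α.naturality (Quiver.Hom.op
            (show objOf d'.unop ⟶ objOf d.unop from ObjectProperty.homMk (F.map (I.map h.unop)))))
            ((adj.homEquiv _ _).symm v)
          have hn' : α.app (Opposite.op (objOf d'.unop))
              (F.map (I.map h.unop) ≫ (adj.homEquiv _ _).symm v) =
              F.map (I.map h.unop) ≫ α.app (Opposite.op (objOf d.unop))
                ((adj.homEquiv _ _).symm v) := hn
          show adj.homEquiv _ _ (α.app (Opposite.op (objOf d'.unop))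
              ((adj.homEquiv _ _).symm (I.map h.unop ≫ v))) =
            I.map h.unop ≫ adj.homEquiv _ _ (α.app (Opposite.op (objOf d.unop))
              ((adj.homEquiv _ _).symm v))
          rw [Adjunction.homEquiv_naturality_left_symm, hn']
          exact Adjunction.homEquiv_naturality_left _ _ _ }
    have := hI.1
    obtain ⟨g, hg⟩ := (nerveFunctor' I).map_surjective β
    refine ⟨G.preimage g, ?_⟩
    have hgf : g = G.map (G.preimage g) := (G.map_preimage g).symm
    ext j u
    change (Opposite.unop j).obj ⟶ X at u
    -- j : (essImage)ᵒᵖ, u : J.obj j.unop ⟶ X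
    obtain ⟨d, ⟨φ⟩⟩ := j.unop.2
    -- naturality of α along φ.hom
    have hn := ConcreteCategory.congr_hom (α.naturality (Quiver.Hom.op
      (show objOf d ⟶ j.unop from ObjectProperty.homMk φ.hom))) u
    dsimp [nerveFunctor'] at hn
    -- value of α at objects of the form F (I d)
    have key : ∀ v : F.obj (I.obj d) ⟶ X,
        α.app (Opposite.op (objOf d)) v = v ≫ G.preimage g := by
      intro v
      have hb : β.app (Opposite.op d) (adj.homEquiv _ _ v) =
          adj.homEquiv _ _ v ≫ g := by
        rw [← hg]; rfl
      have : adj.homEquiv _ _ (α.app (Opposite.op (objOf d)) v) =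
          adj.homEquiv _ _ v ≫ G.map (G.preimage g) := by
        have := hb
        simp only [β, TypeCat.ofHom_apply, ConcreteCategory.hom_ofHom, TypeCat.Fun.mk_apply, Equiv.apply_symm_apply, Equiv.symm_apply_apply] at this
        change adj.homEquiv _ _ (α.app (Opposite.op (objOf d))
          ((adj.homEquiv _ _).symm (adj.homEquiv _ _ v))) = adj.homEquiv _ _ v ≫ g at this
        simp only [Equiv.symm_apply_apply] at this
        rw [← hgf]
        exact this
      apply (adj.homEquiv _ _).injective
      rw [this, ← Adjunction.homEquiv_naturality_right]
    have hn' : α.app (Opposite.op (objOf d)) (φ.hom ≫ u) = φ.hom ≫ α.app j u := hn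
    have key2 : φ.hom ≫ α.app j u = φ.hom ≫ (u ≫ G.preimage g) := by
      rw [← hn', key (φ.hom ≫ u), Category.assoc]
    exact ((cancel_epi φ.hom).mp key2).symm
  · -- Faithfulness
    constructor
    intro X Y f₁ f₂ h
    apply G.map_injective
    have := hI.2
    apply (nerveFunctor' I).map_injective
    ext d v
    change I.obj d.unop ⟶ G.obj X at v
    have h1 := ConcreteCategory.congr_hom (congrArg (fun t => NatTrans.app t (Opposite.op (objOf d.unop))) h)
      ((adj.homEquiv _ _).symm v)
    dsimp [nerveFunctor', J] at h1 ⊢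
    have e1 : v ≫ G.map f₁ = adj.homEquiv _ _ ((adj.homEquiv _ _).symm v ≫ f₁) := by
      rw [Adjunction.homEquiv_naturality_right, Equiv.apply_symm_apply]
    have e2 : v ≫ G.map f₂ = adj.homEquiv _ _ ((adj.homEquiv _ _).symm v ≫ f₂) := by
      rw [Adjunction.homEquiv_naturality_right, Equiv.apply_symm_apply]
    rw [e1, e2]
    exact congrArg _ h1
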